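/- arXiv:2007.01926 — 2 statements merged into one kernel-verified Lean document; each statement's English description precedes it below -/
import Mathlib

section
/- If q is a controlled Lagrangian trajectory for potential V with the potential-energy-shaping control u(t) = β(q(t)), then the desired total energy E_d(t) = (1/2) q̇(t)ᵀ M(q(t)) q̇(t) + V_d(q(t)) is constant: E_d(t₁) = E_d(t₂) for all t₁, t₂ ∈ ℝ. -/
open Matrix

/-- If `q` is a controlled Lagrangian trajectory for potential `V` with the
potential-energy-shaping control `u(t) = β(q(t))`, then the desired total energy
`E_d(t) = (1/2) q̇(t)ᵀ M(q(t)) q̇(t) + V_d(q(t))` is constant. -/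
theorem desired_energy_conserved_under_potential_energy_shaping
    (m k : ℕ) (hm : 1 ≤ m) (hk : 1 ≤ k)
    -- the curve, its velocity and acceleration
    (q qd qdd : ℝ → (Fin m → ℝ))
    (hq : ∀ t, HasDerivAt q (qd t) t)
    (hqd : ∀ t, HasDerivAt qd (qdd t) t)
    -- the mass matrix, symmetric, with `t ↦ M (q t)` differentiable with derivative `Md`
    (M : (Fin m → ℝ) → Matrix (Fin m) (Fin m) ℝ)
    (hMsymm : ∀ x, (M x).IsSymm)
    (Md : ℝ → Matrix (Fin m) (Fin m) ℝ)
    (hM : ∀ i j t, HasDerivAt (fun s => M (q s) i j) (Md t i j) t)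
    -- the potential energy, differentiable with gradient `gradV`
    (V : (Fin m → ℝ) → ℝ)
    (gradV : (Fin m → ℝ) → (Fin m → ℝ))
    (hV : ∀ x, HasFDerivAt V
      (∑ i, gradV x i • (ContinuousLinearMap.proj i : (Fin m → ℝ) →L[ℝ] ℝ)) x)
    -- the desired potential energy, differentiable with gradient `gradVd`
    (Vd : (Fin m → ℝ) → ℝ)
    (gradVd : (Fin m → ℝ) → (Fin m → ℝ))
    (hVd : ∀ x, HasFDerivAt Vd
      (∑ i, gradVd x i • (ContinuousLinearMap.proj i : (Fin m → ℝ) →L[ℝ] ℝ)) x)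
    -- the input matrix, fully actuated: `g(x) g(x)ᵀ` is invertible for every `x`
    (g : (Fin m → ℝ) → Matrix (Fin m) (Fin k) ℝ)
    (hg : ∀ x, IsUnit (g x * (g x)ᵀ))
    -- the potential-energy-shaping control
    (β : (Fin m → ℝ) → (Fin k → ℝ))
    (hβ : ∀ x, β x = ((g x)ᵀ).mulVec (((g x * (g x)ᵀ)⁻¹).mulVec (gradV x - gradVd x)))
    -- `q` is a controlled Lagrangian trajectory for `V` with control `u(t) = β(q(t))`
    (u : ℝ → (Fin k → ℝ))
    (hu : ∀ t, u t = β (q t))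
    (htraj : ∀ t, (M (q t)).mulVec (qdd t) =
      -((1 : ℝ) / 2) • (Md t).mulVec (qd t) - gradV (q t) + (g (q t)).mulVec (u t))
    -- the desired total energy
    (Ed : ℝ → ℝ)
    (hEd : ∀ t, Ed t = (1 / 2 : ℝ) * (qd t ⬝ᵥ (M (q t)).mulVec (qd t)) + Vd (q t)) :
    ∀ t₁ t₂ : ℝ, Ed t₁ = Ed t₂ := by
  -- component derivatives
  have hqdi : ∀ (i : Fin m) (t : ℝ), HasDerivAt (fun s => qd s i) (qdd t i) t := fun i t =>
    (ContinuousLinearMap.proj i : (Fin m → ℝ) →L[ℝ] ℝ).hasFDerivAt.comp_hasDerivAt t (hqd t)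
  -- the control cancels the potential-gradient mismatch
  have hgu : ∀ t, (g (q t)).mulVec (u t) = gradV (q t) - gradVd (q t) := by
    intro t
    rw [hu, hβ, Matrix.mulVec_mulVec, Matrix.mulVec_mulVec,
      Matrix.mul_nonsing_inv _ ((Matrix.isUnit_iff_isUnit_det _).mp (hg (q t))),
      Matrix.one_mulVec]
  have hMq : ∀ t, (M (q t)).mulVec (qdd t) =
      -((1 : ℝ) / 2) • (Md t).mulVec (qd t) - gradVd (q t) := by
    intro t
    rw [htraj, hgu]
    abel
  -- derivative of `Vd ∘ q`
  have hVdq : ∀ t, HasDerivAt (fun s => Vd (q s)) (gradVd (q t) ⬝ᵥ qd t) t := by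
    intro t
    have h := (hVd (q t)).comp_hasDerivAt t (hq t)
    simpa [dotProduct, ContinuousLinearMap.sum_apply, ContinuousLinearMap.smul_apply,
      smul_eq_mul, Function.comp_def] using h
  -- derivative of the kinetic quadratic form
  have hquad : ∀ t, HasDerivAt (fun s => qd s ⬝ᵥ (M (q s)).mulVec (qd s))
      (qdd t ⬝ᵥ (M (q t)).mulVec (qd t) + qd t ⬝ᵥ (Md t).mulVec (qd t)
        + qd t ⬝ᵥ (M (q t)).mulVec (qdd t)) t := by
    intro t
    have h : ∀ i j : Fin m, HasDerivAt (fun s => qd s i * (M (q s) i j * qd s j))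
        (qdd t i * (M (q t) i j * qd t j)
          + qd t i * (Md t i j * qd t j + M (q t) i j * qdd t j)) t :=
      fun i j => (hqdi i t).mul ((hM i j t).mul (hqdi j t))
    have hsum : HasDerivAt (fun s => ∑ i, ∑ j, qd s i * (M (q s) i j * qd s j))
        (∑ i, ∑ j, (qdd t i * (M (q t) i j * qd t j)
          + qd t i * (Md t i j * qd t j + M (q t) i j * qdd t j))) t := by
      apply HasDerivAt.fun_sum
      intro i _
      exact HasDerivAt.fun_sum fun j _ => h i j
    have hfun : (fun s => qd s ⬝ᵥ (M (q s)).mulVec (qd s))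
        = fun s => ∑ i, ∑ j, qd s i * (M (q s) i j * qd s j) := by
      funext s
      simp [dotProduct, mulVec, Finset.mul_sum]
    rw [hfun]
    convert hsum using 1
    simp only [dotProduct, mulVec, Finset.mul_sum, mul_add, Finset.sum_add_distrib]
    ring_nf
  -- the energy has zero derivative
  have hE : ∀ t, HasDerivAt Ed 0 t := by
    intro t
    have hEfun : Ed = fun s => (1 / 2 : ℝ) * (qd s ⬝ᵥ (M (q s)).mulVec (qd s)) + Vd (q s) :=
      funext hEd
    rw [hEfun]
    have hD := ((hquad t).const_mul ((1 : ℝ) / 2)).add (hVdq t)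
    refine hD.congr_deriv ?_
    have hsym : qdd t ⬝ᵥ (M (q t)).mulVec (qd t) = qd t ⬝ᵥ (M (q t)).mulVec (qdd t) := by
      rw [Matrix.dotProduct_mulVec, ← Matrix.mulVec_transpose, (hMsymm (q t)).eq,
        dotProduct_comm]
    have h1 : qd t ⬝ᵥ (M (q t)).mulVec (qdd t)
        = -((1 : ℝ) / 2) * (qd t ⬝ᵥ (Md t).mulVec (qd t)) - qd t ⬝ᵥ gradVd (q t) := by
      rw [hMq t, dotProduct_sub, dotProduct_smul]
      simp [smul_eq_mul]
    have h2 : gradVd (q t) ⬝ᵥ qd t = qd t ⬝ᵥ gradVd (q t) := dotProduct_comm _ _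
    rw [hsym, h1, h2]
    ring
  intro t₁ t₂
  exact is_const_of_deriv_eq_zero (fun t => (hE t).differentiableAt)
    (fun t => (hE t).deriv) t₁ t₂
end

section
/- (Damping injection dissipates the desired energy) If q is a controlled Lagrangian trajectory for potential V with control u(t) = β(q(t)) + v(q̇(t)), where v(w) = −g(q(t))ᵀ (g(q(t)) g(q(t))ᵀ)⁻¹ K_d w, then the desired total energy E_d(t) = (1/2) q̇(t)ᵀ M(q(t)) q̇(t) + V_d(q(t)) is differentiable with E_d'(t) = −q̇(t)ᵀ K_d q̇(t) for all t; in particular, if K_d is positive semidefinite then E_d'(t) ≤ 0 for all t, so E_d is nonincreasing. -/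
open Matrix

/-- Damping injection dissipates the desired energy: if `q` is a controlled Lagrangian
trajectory for potential `V` with control `u(t) = β(q(t)) + v(q̇(t))`, where
`v(w) = −g(q(t))ᵀ (g(q(t)) g(q(t))ᵀ)⁻¹ K_d w`, then the desired total energy `E_d` is
differentiable with `E_d'(t) = −q̇(t)ᵀ K_d q̇(t)`; in particular, if `K_d` is positive
semidefinite then `E_d'(t) ≤ 0` for all `t`, so `E_d` is nonincreasing. -/
theorem damping_injection_dissipates_desired_energy
    (m k : ℕ) (hm : 1 ≤ m) (hk : 1 ≤ k)
    -- the curve, its velocity and acceleration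
    (q qd qdd : ℝ → (Fin m → ℝ))
    (hq : ∀ t, HasDerivAt q (qd t) t)
    (hqd : ∀ t, HasDerivAt qd (qdd t) t)
    -- the mass matrix, symmetric, with `t ↦ M (q t)` differentiable with derivative `Md`
    (M : (Fin m → ℝ) → Matrix (Fin m) (Fin m) ℝ)
    (hMsymm : ∀ x, (M x).IsSymm)
    (Md : ℝ → Matrix (Fin m) (Fin m) ℝ)
    (hM : ∀ i j t, HasDerivAt (fun s => M (q s) i j) (Md t i j) t)
    -- the potential energy, differentiable with gradient `gradV`
    (V : (Fin m → ℝ) → ℝ)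
    (gradV : (Fin m → ℝ) → (Fin m → ℝ))
    (hV : ∀ x, HasFDerivAt V
      (∑ i, gradV x i • (ContinuousLinearMap.proj i : (Fin m → ℝ) →L[ℝ] ℝ)) x)
    -- the desired potential energy, differentiable with gradient `gradVd`
    (Vd : (Fin m → ℝ) → ℝ)
    (gradVd : (Fin m → ℝ) → (Fin m → ℝ))
    (hVd : ∀ x, HasFDerivAt Vd
      (∑ i, gradVd x i • (ContinuousLinearMap.proj i : (Fin m → ℝ) →L[ℝ] ℝ)) x)
    -- the input matrix, fully actuated: `g(x) g(x)ᵀ` is invertible for every `x`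
    (g : (Fin m → ℝ) → Matrix (Fin m) (Fin k) ℝ)
    (hg : ∀ x, IsUnit (g x * (g x)ᵀ))
    -- the potential-energy-shaping control
    (β : (Fin m → ℝ) → (Fin k → ℝ))
    (hβ : ∀ x, β x = ((g x)ᵀ).mulVec (((g x * (g x)ᵀ)⁻¹).mulVec (gradV x - gradVd x)))
    -- the damping matrix and the damping injection (with `g` evaluated along the curve)
    (Kd : Matrix (Fin m) (Fin m) ℝ)
    (v : ℝ → (Fin m → ℝ) → (Fin k → ℝ))
    (hv : ∀ t w, v t w =
      -(((g (q t))ᵀ).mulVec (((g (q t) * (g (q t))ᵀ)⁻¹).mulVec (Kd.mulVec w))))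
    -- `q` is a controlled Lagrangian trajectory for `V` with control `β(q(t)) + v(q̇(t))`
    (u : ℝ → (Fin k → ℝ))
    (hu : ∀ t, u t = β (q t) + v t (qd t))
    (htraj : ∀ t, (M (q t)).mulVec (qdd t) =
      -((1 : ℝ) / 2) • (Md t).mulVec (qd t) - gradV (q t) + (g (q t)).mulVec (u t))
    -- the desired total energy
    (Ed : ℝ → ℝ)
    (hEd : ∀ t, Ed t = (1 / 2 : ℝ) * (qd t ⬝ᵥ (M (q t)).mulVec (qd t)) + Vd (q t)) :
    (∀ t, HasDerivAt Ed (-(qd t ⬝ᵥ Kd.mulVec (qd t))) t) ∧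
    (Kd.PosSemidef → (∀ t, -(qd t ⬝ᵥ Kd.mulVec (qd t)) ≤ 0) ∧ Antitone Ed) := by

  -- component derivatives
  have hqdc : ∀ t (i : Fin m), HasDerivAt (fun s => qd s i) (qdd t i) t :=
    fun t i => (hasDerivAt_pi.mp (hqd t)) i
  -- control effect: g(q t).mulVec (u t) = gradV - gradVd - Kd qd
  have hgu : ∀ t, (g (q t)).mulVec (u t) =
      gradV (q t) - gradVd (q t) - Kd.mulVec (qd t) := by
    intro t
    have hdet : IsUnit (g (q t) * (g (q t))ᵀ).det :=
      (Matrix.isUnit_iff_isUnit_det _).mp (hg (q t))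
    have hinv : (g (q t) * (g (q t))ᵀ) * (g (q t) * (g (q t))ᵀ)⁻¹ = 1 :=
      Matrix.mul_nonsing_inv _ hdet
    have key : ∀ w : Fin m → ℝ,
        (g (q t)).mulVec (((g (q t))ᵀ).mulVec (((g (q t) * (g (q t))ᵀ)⁻¹).mulVec w)) = w := by
      intro w
      rw [Matrix.mulVec_mulVec, Matrix.mulVec_mulVec, hinv, Matrix.one_mulVec]
    rw [hu t, hβ (q t), hv t, Matrix.mulVec_add, Matrix.mulVec_neg, key, key]
    abel
  -- key: qd ⬝ᵥ M qdd
  have hMqdd : ∀ t, qd t ⬝ᵥ (M (q t)).mulVec (qdd t) =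
      -(1/2 : ℝ) * (qd t ⬝ᵥ (Md t).mulVec (qd t)) - qd t ⬝ᵥ gradVd (q t)
        - qd t ⬝ᵥ Kd.mulVec (qd t) := by
    intro t
    rw [htraj t, hgu t]
    simp [dotProduct_add, dotProduct_sub, dotProduct_smul, smul_eq_mul]
    ring
  -- symmetry: qdd ⬝ᵥ M qd = qd ⬝ᵥ M qdd
  have hsym : ∀ t, qdd t ⬝ᵥ (M (q t)).mulVec (qd t) = qd t ⬝ᵥ (M (q t)).mulVec (qdd t) := by
    intro t
    rw [Matrix.dotProduct_mulVec, ← Matrix.mulVec_transpose, (hMsymm (q t)).eq,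
      dotProduct_comm]
  -- derivative of quadratic term
  have hquad : ∀ t, HasDerivAt (fun s => qd s ⬝ᵥ (M (q s)).mulVec (qd s))
      (qdd t ⬝ᵥ (M (q t)).mulVec (qd t) + qd t ⬝ᵥ (Md t).mulVec (qd t)
        + qd t ⬝ᵥ (M (q t)).mulVec (qdd t)) t := by
    intro t
    have hfun : (fun s => qd s ⬝ᵥ (M (q s)).mulVec (qd s)) =
        fun s => ∑ i, ∑ j, qd s i * (M (q s) i j * qd s j) := by
      funext s
      simp [dotProduct, Matrix.mulVec, Finset.mul_sum]
    rw [hfun]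
    have hterm : ∀ (i j : Fin m), HasDerivAt (fun s => qd s i * (M (q s) i j * qd s j))
        (qdd t i * (M (q t) i j * qd t j)
          + qd t i * (Md t i j * qd t j + M (q t) i j * qdd t j)) t :=
      fun i j => (hqdc t i).mul ((hM i j t).mul (hqdc t j))
    have := HasDerivAt.fun_sum (u := Finset.univ)
      (fun i _ => HasDerivAt.fun_sum (u := Finset.univ) (fun j _ => hterm i j))
    refine this.congr_deriv ?_
    simp [dotProduct, Matrix.mulVec, Finset.mul_sum, Finset.sum_add_distrib, mul_add]
    ring_nf
  -- derivative of Vd ∘ q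
  have hVdq : ∀ t, HasDerivAt (fun s => Vd (q s)) (qd t ⬝ᵥ gradVd (q t)) t := by
    intro t
    have := (hVd (q t)).comp_hasDerivAt t (hq t)
    refine this.congr_deriv ?_
    simp [ContinuousLinearMap.sum_apply, dotProduct, mul_comm]
  -- total derivative
  have hEd' : ∀ t, HasDerivAt Ed (-(qd t ⬝ᵥ Kd.mulVec (qd t))) t := by
    intro t
    have h1 := ((hquad t).const_mul (1/2 : ℝ)).add (hVdq t)
    have hfun : Ed = fun s => (1/2 : ℝ) * (qd s ⬝ᵥ (M (q s)).mulVec (qd s)) + Vd (q s) := by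
      funext s; exact hEd s
    rw [hfun]
    refine h1.congr_deriv ?_
    rw [hsym t, hMqdd t]
    ring
  refine ⟨hEd', fun hKd => ?_⟩
  have hnonpos : ∀ t, -(qd t ⬝ᵥ Kd.mulVec (qd t)) ≤ 0 := by
    intro t
    have := hKd.dotProduct_mulVec_nonneg (qd t)
    simp only [star_trivial] at this
    linarith
  refine ⟨hnonpos, ?_⟩
  apply antitone_of_deriv_nonpos
  · exact fun t => (hEd' t).differentiableAt
  · intro t
    rw [(hEd' t).deriv]
    exact hnonpos t
end
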